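/- Every closed sequence-covering continuous surjection f : X → Y between T1 regular spaces, where X is submetrizable, is 1-sequence-covering: for every y ∈ Y there exists x ∈ f⁻¹(y) such that every nontrivial sequence in Y converging to y is covered by some sequence in X converging to x. -/

import Mathlib

universe u

open Filter Topology Set Function

/-- `p` is a nontrivial sequence converging to `y`. -/
def NontrivialConvTo {Y : Type*} [TopologicalSpace Y] (p : ℕ → Y) (y : Y) : Prop :=
  Tendsto p atTop (𝓝 y) ∧ ¬ ∃ N, ∀ n ≥ N, p n = p N

section Aux

variable {X Y M : Type*} [TopologicalSpace X] [TopologicalSpace Y] [MetricSpace M]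

/-- `x` is a "cluster point through `f`" of the sequence `p`. -/
def AclPred (f : X → Y) (p : ℕ → Y) (x : X) : Prop :=
  ∀ U : Set X, IsOpen U → x ∈ U → ∃ᶠ n in atTop, p n ∈ f '' U

/-- strong form: all opens around `x` eventually absorb `p` through `f`. -/
def BevPred (f : X → Y) (p : ℕ → Y) (x : X) : Prop :=
  ∀ U : Set X, IsOpen U → x ∈ U → ∀ᶠ n in atTop, p n ∈ f '' U

lemma BevPred.acl {f : X → Y} {p : ℕ → Y} {x : X} (h : BevPred f p x) : AclPred f p x :=
  fun U hU hx => (h U hU hx).frequently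

lemma isClosed_aclPred (f : X → Y) (p : ℕ → Y) : IsClosed {x | AclPred f p x} := by
  rw [← isOpen_compl_iff]
  rw [isOpen_iff_forall_mem_open]
  intro x hx
  simp only [mem_compl_iff, mem_setOf_eq, AclPred] at hx
  push_neg at hx
  obtain ⟨U, hUo, hxU, hfreq⟩ := hx
  refine ⟨U, fun x' hx' hAcl => ?_, hUo, hxU⟩
  exact (hAcl U hUo hx') hfreq

lemma nontrivialConvTo_of_ne [T2Space Y] {p : ℕ → Y} {y : Y}
    (hp : Tendsto p atTop (𝓝 y)) (hne : ∀ n, p n ≠ y) : NontrivialConvTo p y := by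
  refine ⟨hp, ?_⟩
  rintro ⟨N, hN⟩
  have h1 : Tendsto (fun _ : ℕ => p N) atTop (𝓝 y) := by
    refine hp.congr' ?_
    filter_upwards [eventually_ge_atTop N] with n hn
    exact hN n hn
  exact hne N (tendsto_nhds_unique h1 tendsto_const_nhds).symm

lemma NontrivialConvTo.exists_ne [T2Space Y] {p : ℕ → Y} {y : Y} (h : NontrivialConvTo p y) :
    ∃ p' : ℕ → Y, NontrivialConvTo p' y ∧ ∀ n, p' n ≠ y := by
  have hfreq : ∃ᶠ n in atTop, p n ≠ y := by
    by_contra hev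
    rw [not_frequently] at hev
    simp only [not_ne_iff] at hev
    obtain ⟨N, hN⟩ := eventually_atTop.mp hev
    exact h.2 ⟨N, fun n hn => (hN n hn).trans (hN N le_rfl).symm⟩
  obtain ⟨φ, hφ, hne⟩ := extraction_of_frequently_atTop hfreq
  exact ⟨p ∘ φ, nontrivialConvTo_of_ne (h.1.comp hφ.tendsto_atTop) hne, hne⟩

lemma noCluster_isClosed [T1Space X] {u : ℕ → X} (hnc : ∀ z, ¬ MapClusterPt z atTop u)
    (I : Set ℕ) : IsClosed (u '' I) := by
  have key : ∀ z, z ∈ closure (u '' I) → z ∈ u '' I := by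
    intro z hz
    have h1 : ∃ U : Set X, IsOpen U ∧ z ∈ U ∧ {n | u n ∈ U}.Finite := by
      have h := hnc z
      rw [mapClusterPt_iff_frequently] at h
      push_neg at h
      obtain ⟨s, hs, hfreq⟩ := h
      obtain ⟨N, hN⟩ := eventually_atTop.mp hfreq
      refine ⟨interior s, isOpen_interior, mem_interior_iff_mem_nhds.mpr hs, ?_⟩
      refine (Set.finite_Iio N).subset fun n hn => ?_
      by_contra hcon
      exact hN n (by simpa using hcon) (interior_subset hn)
    obtain ⟨U, hUo, hzU, hfin⟩ := h1
    have h2 : z ∈ closure (u '' I ∩ U) := by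
      rw [mem_closure_iff] at hz ⊢
      intro O hO hzO
      obtain ⟨w, hw1, hw2⟩ := hz (O ∩ U) (hO.inter hUo) ⟨hzO, hzU⟩
      exact ⟨w, hw1.1, hw2, hw1.2⟩
    have h3 : (u '' I ∩ U).Finite := by
      refine (hfin.image u).subset ?_
      rintro w ⟨⟨n, hnI, rfl⟩, hwU⟩
      exact ⟨n, hwU, rfl⟩
    rw [h3.isClosed.closure_eq] at h2
    exact h2.1
  exact closure_subset_iff_isClosed.mp key

lemma cluster_of_isClosedMap [T1Space X] {f : X → Y} (hclosed : IsClosedMap f)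
    {w : ℕ → X} {y₀ : Y} (hr : Tendsto (fun n => f (w n)) atTop (𝓝 y₀))
    (hne : ∀ n, f (w n) ≠ y₀) : ∃ z, MapClusterPt z atTop w := by
  by_contra hno
  push_neg at hno
  have h1 : IsClosed (Set.range w) := by
    simpa [Set.image_univ] using noCluster_isClosed hno Set.univ
  have h2 : IsClosed (f '' Set.range w) := hclosed _ h1
  have h3 : y₀ ∈ f '' Set.range w := by
    have h4 : y₀ ∈ closure (f '' Set.range w) :=
      mem_closure_of_tendsto hr (Eventually.of_forall fun n => ⟨w n, ⟨n, rfl⟩, rfl⟩)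
    rwa [h2.closure_eq] at h4
  obtain ⟨x, ⟨n, rfl⟩, hfx⟩ := h3
  exact hne n hfx

lemma MapClusterPt.mem_closure_range' {u : ℕ → X} {z : X} (h : MapClusterPt z atTop u) :
    z ∈ closure (Set.range u) := by
  rw [mem_closure_iff_clusterPt]
  exact h.clusterPt.mono (le_principal_iff.mpr range_mem_map)

lemma cluster_transfer {v v' : ℕ → M} {m : M}
    (h : MapClusterPt m atTop v) (hd : Tendsto (fun n => dist (v n) (v' n)) atTop (𝓝 0)) :
    MapClusterPt m atTop v' := by
  rw [mapClusterPt_iff_frequently] at h ⊢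
  intro s hs
  obtain ⟨ε, hε, hball⟩ := Metric.mem_nhds_iff.mp hs
  have h2 : ∀ᶠ n in atTop, dist (v n) (v' n) < ε / 2 :=
    hd.eventually (gt_mem_nhds (by linarith))
  have h3 : ∃ᶠ n in atTop, v n ∈ Metric.ball m (ε / 2) :=
    h _ (Metric.ball_mem_nhds m (by linarith))
  refine (h3.and_eventually h2).mono ?_
  rintro n ⟨hn1, hn2⟩
  apply hball
  rw [Metric.mem_ball] at hn1 ⊢
  calc dist (v' n) m ≤ dist (v' n) (v n) + dist (v n) m := dist_triangle _ _ _
    _ < ε := by rw [dist_comm] at hn2; linarith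

lemma MapClusterPt.eq_of_tendsto {v : ℕ → M} {a b : M}
    (h : MapClusterPt a atTop v) (h' : Tendsto v atTop (𝓝 b)) : a = b :=
  eq_of_nhds_neBot (h.clusterPt.mono h')

end Aux
section Core

variable {X Y M : Type*} [TopologicalSpace X] [TopologicalSpace Y] [MetricSpace M]
  [T1Space X] [RegularSpace X]

/-- Choose lifted points close to a sequence of points, each being an `f`-cluster point
of `p₀`. -/
lemma exists_lift_near {f : X → Y} (hclosed : IsClosedMap f)
    {p₀ : ℕ → Y} {y : Y} (hp₀t : Tendsto p₀ atTop (𝓝 y)) (hp₀ne : ∀ n, p₀ n ≠ y)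
    {u : ℕ → X} (hu : ∀ j, AclPred f p₀ (u j))
    (V : ℕ → Set X) (hVo : ∀ j, IsOpen (V j)) (hVm : ∀ j, u j ∈ V j) :
    ∃ (w : ℕ → X), (∀ j, w j ∈ V j) ∧ (∃ φ : ℕ → ℕ, StrictMono φ ∧ ∀ j, f (w j) = p₀ (φ j)) ∧
      ∃ z, MapClusterPt z atTop w := by
  have hfreq : ∀ j, ∃ᶠ k in atTop, p₀ k ∈ f '' V j := fun j => hu j (V j) (hVo j) (hVm j)
  obtain ⟨φ, hφ, hP⟩ := extraction_forall_of_frequently hfreq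
  choose w hwV hfw using hP
  have hcl : ∃ z, MapClusterPt z atTop w := by
    refine cluster_of_isClosedMap hclosed (y₀ := y) ?_ ?_
    · have h1 : Tendsto (p₀ ∘ φ) atTop (𝓝 y) := hp₀t.comp hφ.tendsto_atTop
      exact h1.congr fun j => (hfw j).symm
    · intro j
      rw [hfw j]
      exact hp₀ne (φ j)
  exact ⟨w, hwV, ⟨φ, hφ, hfw⟩, hcl⟩

/-- Countable compactness of the set of `f`-cluster points of `p₀`: any sequence of such
points has a cluster point. Uses the coarser metric topology via `g`. -/
lemma exists_clusterPt_of_acl {f : X → Y} {g : X → M}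
    (hclosed : IsClosedMap f) (hg : Continuous g) (hginj : Injective g)
    {p₀ : ℕ → Y} {y : Y} (hp₀t : Tendsto p₀ atTop (𝓝 y)) (hp₀ne : ∀ n, p₀ n ≠ y)
    {u : ℕ → X} (hu : ∀ j, AclPred f p₀ (u j)) :
    ∃ z, MapClusterPt z atTop u := by
  by_contra hno
  push_neg at hno
  have hrad : ∀ j : ℕ, (0:ℝ) < 1 / (j + 1) := fun j => by positivity
  have hradt : Tendsto (fun j : ℕ => 1 / ((j:ℝ) + 1)) atTop (𝓝 0) :=
    tendsto_one_div_add_atTop_nhds_zero_nat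
  -- Step 1: find z₁ with g z₁ a cluster point of g ∘ u
  obtain ⟨w, hwV, ⟨φ, hφ, hfw⟩, z₁, hz₁⟩ :=
    exists_lift_near hclosed hp₀t hp₀ne hu
      (fun j => g ⁻¹' Metric.ball (g (u j)) (1 / (j + 1)))
      (fun j => Metric.isOpen_ball.preimage hg)
      (fun j => by simp [Metric.mem_ball]; positivity)
  have hd1 : Tendsto (fun j => dist (g (w j)) (g (u j))) atTop (𝓝 0) := by
    refine squeeze_zero (fun j => dist_nonneg) (fun j => le_of_lt ?_) hradt
    exact hwV j
  have hgz₁ : MapClusterPt (g z₁) atTop (g ∘ u) :=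
    cluster_transfer (hz₁.continuousAt_comp hg.continuousAt) hd1
  -- Step 2: extract a subsequence of g ∘ u converging to g z₁
  obtain ⟨ψ, hψ, hψconv⟩ := TopologicalSpace.FirstCountableTopology.tendsto_subseq hgz₁
  -- Step 3: only finitely many terms equal z₁
  have hfin : {j | u (ψ j) = z₁}.Finite := by
    by_contra hinf
    rw [← Set.not_infinite, not_not] at hinf
    have hfr : ∃ᶠ j in atTop, u (ψ j) = z₁ := Nat.frequently_atTop_iff_infinite.mpr hinf
    have hcl : MapClusterPt z₁ atTop (u ∘ ψ) := by
      rw [mapClusterPt_iff_frequently]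
      intro s hs
      exact hfr.mono fun j hj => by rw [comp_apply, hj]; exact mem_of_mem_nhds hs
    exact hno z₁ (hcl.of_comp hψ.tendsto_atTop)
  obtain ⟨J₀, hJ₀⟩ : ∃ J₀ : ℕ, ∀ j ≥ J₀, u (ψ j) ≠ z₁ := by
    obtain ⟨J, hJ⟩ := hfin.bddAbove
    refine ⟨J + 1, fun j hj hcon => ?_⟩
    have := hJ hcon
    omega
  -- Step 4: the tail subsequence has closed range not containing z₁
  set φ' : ℕ → ℕ := fun j => ψ (j + J₀) with hφ'def
  set u' : ℕ → X := fun j => u (φ' j) with hu'def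
  have hφ't : Tendsto φ' atTop atTop := hψ.tendsto_atTop.comp (tendsto_add_atTop_nat J₀)
  have hno' : ∀ z, ¬ MapClusterPt z atTop u' := fun z hz =>
    hno z (MapClusterPt.of_comp (u := u) hφ't hz)
  have hCcl : IsClosed (Set.range u') := by
    simpa [Set.image_univ] using noCluster_isClosed hno' Set.univ
  have hz₁C : z₁ ∉ Set.range u' := by
    rintro ⟨j, hj⟩
    exact hJ₀ (j + J₀) (by omega) hj
  -- Step 5: closed neighborhood of z₁ avoiding range u'
  have hcompl : (Set.range u')ᶜ ∈ 𝓝 z₁ := hCcl.isOpen_compl.mem_nhds hz₁C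
  obtain ⟨N, ⟨hNnhds, hNcl⟩, hNsub⟩ := (closed_nhds_basis z₁).mem_iff.mp hcompl
  -- Step 6: second lifting, avoiding N
  have hu'A : ∀ j, AclPred f p₀ (u' j) := fun j => hu (φ' j)
  have hu'N : ∀ j, u' j ∈ Nᶜ := fun j hj => hNsub hj ⟨j, rfl⟩
  obtain ⟨w', hw'V, ⟨φ₂, hφ₂, hfw'⟩, z₂, hz₂⟩ :=
    exists_lift_near hclosed hp₀t hp₀ne hu'A
      (fun j => g ⁻¹' Metric.ball (g (u' j)) (1 / (j + 1)) ∩ Nᶜ)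
      (fun j => (Metric.isOpen_ball.preimage hg).inter hNcl.isOpen_compl)
      (fun j => ⟨by simp [Metric.mem_ball]; positivity, hu'N j⟩)
  -- z₂ = z₁
  have hgu' : Tendsto (fun j => g (u' j)) atTop (𝓝 (g z₁)) := by
    have h1 : Tendsto (fun j => ((g ∘ u) ∘ ψ) (j + J₀)) atTop (𝓝 (g z₁)) :=
      hψconv.comp (tendsto_add_atTop_nat J₀)
    exact h1
  have hgw' : Tendsto (g ∘ w') atTop (𝓝 (g z₁)) := by
    rw [tendsto_iff_dist_tendsto_zero]
    refine squeeze_zero (fun j => dist_nonneg) (fun j =>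
      dist_triangle (g (w' j)) (g (u' j)) (g z₁)) ?_
    have h2 : Tendsto (fun j => dist (g (w' j)) (g (u' j))) atTop (𝓝 0) := by
      refine squeeze_zero (fun j => dist_nonneg) (fun j => le_of_lt (hw'V j).1) hradt
    have h3 : Tendsto (fun j => dist (g (u' j)) (g z₁)) atTop (𝓝 0) :=
      tendsto_iff_dist_tendsto_zero.mp hgu'
    simpa using h2.add h3
  have hz₂z₁ : z₂ = z₁ := by
    have h4 : MapClusterPt (g z₂) atTop (g ∘ w') := hz₂.continuousAt_comp hg.continuousAt
    exact hginj (h4.eq_of_tendsto hgw')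
  -- contradiction: z₂ ∈ closure Nᶜ but z₁ ∈ interior N
  have hz₂mem : z₂ ∈ closure (Nᶜ) := by
    refine closure_mono ?_ hz₂.mem_closure_range'
    rintro _ ⟨j, rfl⟩
    exact (hw'V j).2
  have hz₁int : z₁ ∈ interior N := mem_interior_iff_mem_nhds.mpr hNnhds
  rw [hz₂z₁] at hz₂mem
  have : (interior N ∩ Nᶜ).Nonempty := by
    rw [mem_closure_iff] at hz₂mem
    exact hz₂mem (interior N) isOpen_interior hz₁int
  obtain ⟨v, hv1, hv2⟩ := this
  exact hv2 (interior_subset hv1)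

end Core
section Compact

variable {X Y M : Type*} [TopologicalSpace X] [TopologicalSpace Y] [MetricSpace M]
  [T1Space X] [RegularSpace X]

lemma isCompact_of_acl {f : X → Y} {g : X → M}
    (hclosed : IsClosedMap f) (hg : Continuous g) (hginj : Injective g)
    {p₀ : ℕ → Y} {y : Y} (hp₀t : Tendsto p₀ atTop (𝓝 y)) (hp₀ne : ∀ n, p₀ n ≠ y)
    {K : Set X} (hKc : IsClosed K) (hKA : ∀ x ∈ K, AclPred f p₀ x) : IsCompact K := by
  have himg : ∀ D : Set X, IsClosed D → D ⊆ K → IsCompact (g '' D) := by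
    intro D hD hDK
    refine IsSeqCompact.isCompact ?_
    intro v hv
    choose u huD hgu using hv
    obtain ⟨z, hz⟩ := exists_clusterPt_of_acl hclosed hg hginj hp₀t hp₀ne
      (fun j => hKA _ (hDK (huD j)))
    have hzD : z ∈ D := by
      have h1 : closure (Set.range u) ⊆ D :=
        closure_minimal (Set.range_subset_iff.mpr huD) hD
      exact h1 hz.mem_closure_range'
    have h2 : MapClusterPt (g z) atTop v := by
      have h3 : MapClusterPt (g z) atTop (g ∘ u) := hz.continuousAt_comp hg.continuousAt
      have h4 : g ∘ u = v := funext hgu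
      rwa [h4] at h3
    obtain ⟨ψ, hψ, hconv⟩ := TopologicalSpace.FirstCountableTopology.tendsto_subseq h2
    exact ⟨g z, ⟨z, hzD, rfl⟩, ψ, hψ, hconv⟩
  rw [isCompact_iff_ultrafilter_le_nhds]
  intro F hF
  have hKF : K ∈ F := le_principal_iff.mp hF
  have h1 : g '' K ∈ Ultrafilter.map g F := by
    rw [Ultrafilter.mem_map]
    exact mem_of_superset hKF (subset_preimage_image g K)
  obtain ⟨m, hmK, hm⟩ := (himg K hKc subset_rfl).ultrafilter_le_nhds (Ultrafilter.map g F)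
    (le_principal_iff.mpr h1)
  obtain ⟨x₀, hx₀K, rfl⟩ := hmK
  refine ⟨x₀, hx₀K, ?_⟩
  intro s hs
  obtain ⟨U, hUs, hUo, hxU⟩ := mem_nhds_iff.mp hs
  refine mem_of_superset ?_ hUs
  by_contra hUF
  have hUc : Uᶜ ∈ F := Ultrafilter.compl_mem_iff_notMem.mpr hUF
  set D := closure (Uᶜ ∩ K) with hDdef
  have hDK : D ⊆ K := closure_minimal Set.inter_subset_right hKc
  have hDcl : IsClosed D := isClosed_closure
  have hgD : IsCompact (g '' D) := himg D hDcl hDK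
  have hgDF : g '' D ∈ Ultrafilter.map g F := by
    rw [Ultrafilter.mem_map]
    refine mem_of_superset (inter_mem hUc hKF) ?_
    exact subset_trans subset_closure (subset_preimage_image g D)
  have hmD : g x₀ ∈ g '' D := by
    have h5 : g x₀ ∈ closure (g '' D) := by
      rw [mem_closure_iff_clusterPt]
      have h7 : (𝓝 (g x₀) ⊓ 𝓟 (g '' D)).NeBot :=
        (Ultrafilter.map g F).neBot.mono (le_inf hm (le_principal_iff.mpr hgDF))
      exact h7
    rwa [hgD.isClosed.closure_eq] at h5
  obtain ⟨x₁, hx₁D, hx₁⟩ := hmD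
  have hx₁x₀ : x₁ = x₀ := hginj hx₁
  rw [hx₁x₀] at hx₁D
  have : x₀ ∈ Uᶜ := by
    have h6 : D ⊆ Uᶜ := closure_minimal Set.inter_subset_left (isClosed_compl_iff.mpr hUo)
    exact h6 hx₁D
  exact this hxU

end Compact
section Merge

variable {Y : Type*} [TopologicalSpace Y]

/-- Interleaving of two sequences. -/
def mergeSeq (u v : ℕ → Y) : ℕ → Y := fun n => if n % 2 = 0 then u (n / 2) else v (n / 2)

lemma mergeSeq_even (u v : ℕ → Y) (k : ℕ) : mergeSeq u v (2 * k) = u k := by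
  unfold mergeSeq
  rw [if_pos (by omega)]
  congr 1
  omega

lemma mergeSeq_odd (u v : ℕ → Y) (k : ℕ) : mergeSeq u v (2 * k + 1) = v k := by
  unfold mergeSeq
  rw [if_neg (by omega)]
  congr 1
  omega

lemma mergeSeq_tendsto {u v : ℕ → Y} {y : Y} (hu : Tendsto u atTop (𝓝 y))
    (hv : Tendsto v atTop (𝓝 y)) : Tendsto (mergeSeq u v) atTop (𝓝 y) := by
  rw [tendsto_atTop'] at hu hv ⊢
  intro s hs
  obtain ⟨N₁, hN₁⟩ := hu s hs
  obtain ⟨N₂, hN₂⟩ := hv s hs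
  refine ⟨2 * (max N₁ N₂) + 2, fun n hn => ?_⟩
  unfold mergeSeq
  by_cases h : n % 2 = 0
  · rw [if_pos h]
    exact hN₁ _ (by omega)
  · rw [if_neg h]
    exact hN₂ _ (by omega)

lemma mergeSeq_eventually_left {u v : ℕ → Y} {Q : Y → Prop}
    (h : ∀ᶠ n in atTop, Q (mergeSeq u v n)) : ∀ᶠ k in atTop, Q (u k) := by
  obtain ⟨N, hN⟩ := eventually_atTop.mp h
  refine eventually_atTop.mpr ⟨N, fun k hk => ?_⟩
  have := hN (2 * k) (by omega)
  rwa [mergeSeq_even] at this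

lemma mergeSeq_eventually_right {u v : ℕ → Y} {Q : Y → Prop}
    (h : ∀ᶠ n in atTop, Q (mergeSeq u v n)) : ∀ᶠ k in atTop, Q (v k) := by
  obtain ⟨N, hN⟩ := eventually_atTop.mp h
  refine eventually_atTop.mpr ⟨N, fun k hk => ?_⟩
  have := hN (2 * k + 1) (by omega)
  rwa [mergeSeq_odd] at this

lemma mergeSeq_nontrivial {u v : ℕ → Y} {y : Y} (hu : NontrivialConvTo u y)
    (hv : Tendsto v atTop (𝓝 y)) : NontrivialConvTo (mergeSeq u v) y := by
  refine ⟨mergeSeq_tendsto hu.1 hv, ?_⟩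
  rintro ⟨N, hN⟩
  refine hu.2 ⟨N, fun k hk => ?_⟩
  have h1 : u k = mergeSeq u v N := by
    rw [← mergeSeq_even u v k]
    exact hN (2 * k) (by omega)
  have h2 : u N = mergeSeq u v N := by
    rw [← mergeSeq_even u v N]
    exact hN (2 * N) (by omega)
  rw [h1, h2]

lemma exists_merge {ι : Type*} (t : Finset ι) {y : Y} (p₀ : ℕ → Y)
    (hp₀ : NontrivialConvTo p₀ y) (s : ι → ℕ → Y) (hs : ∀ i ∈ t, NontrivialConvTo (s i) y) :
    ∃ Q : ℕ → Y, NontrivialConvTo Q y ∧ ∀ S : Set Y,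
      (∀ᶠ n in atTop, Q n ∈ S) →
        (∀ᶠ n in atTop, p₀ n ∈ S) ∧ ∀ i ∈ t, ∀ᶠ n in atTop, s i n ∈ S := by
  classical
  induction t using Finset.induction_on with
  | empty => exact ⟨p₀, hp₀, fun S hS => ⟨hS, fun i hi => absurd hi (Finset.notMem_empty i)⟩⟩
  | insert _ _ ha ih =>
    rename_i a t'
    obtain ⟨Q, hQ, hQtrans⟩ := ih (fun i hi => hs i (Finset.mem_insert_of_mem hi))
    have hsa : NontrivialConvTo (s a) y := hs a (Finset.mem_insert_self a t')
    refine ⟨mergeSeq Q (s a), mergeSeq_nontrivial hQ hsa.1, fun S hS => ?_⟩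
    have hl := mergeSeq_eventually_left hS
    have hr := mergeSeq_eventually_right hS
    obtain ⟨hp₀S, htS⟩ := hQtrans S hl
    refine ⟨hp₀S, fun i hi => ?_⟩
    rcases Finset.mem_insert.mp hi with rfl | hi'
    · exact hr
    · exact htS i hi'

end Merge

section Good

variable {X Y : Type*} [TopologicalSpace X] [TopologicalSpace Y]

lemma bevPred_of_good [T2Space Y] {f : X → Y} {x : X} {y : Y} (hfx : f x = y)
    (hgood : ∀ U : Set X, IsOpen U → x ∈ U → ∀ s : ℕ → Y, NontrivialConvTo s y →
      ∃ n, s n ∈ f '' U)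
    {p : ℕ → Y} (hp : NontrivialConvTo p y) : BevPred f p x := by
  intro U hU hxU
  by_contra hev
  obtain ⟨φ, hφ, hpφ⟩ := extraction_of_frequently_atTop (not_eventually.mp hev)
  have hne : ∀ j, (p ∘ φ) j ≠ y := fun j hj => hpφ j (by
    have : f x = p (φ j) := by rw [hfx]; exact hj.symm
    exact ⟨x, hxU, this⟩)
  have hnt : NontrivialConvTo (p ∘ φ) y :=
    nontrivialConvTo_of_ne (hp.1.comp hφ.tendsto_atTop) hne
  obtain ⟨n, hn⟩ := hgood U hU hxU (p ∘ φ) hnt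
  exact hpφ n hn

end Good
section Lift

variable {X Y M : Type*} [TopologicalSpace X] [TopologicalSpace Y] [MetricSpace M]
  [T1Space X]

/-- Given a point `x` over `y` that strongly absorbs `p` (`BevPred`), construct a lift of `p`
converging to `x`, using the coarser metric (via `g`) and closedness of `f`. -/
lemma exists_lift_tendsto {f : X → Y} {g : X → M}
    (hclosed : IsClosedMap f) (hg : Continuous g) (hginj : Injective g)
    (hsurj : Surjective f)
    {x : X} {y : Y} (hfx : f x = y) {p : ℕ → Y} (hpt : Tendsto p atTop (𝓝 y))
    (hB : BevPred f p x) :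
    ∃ q : ℕ → X, Tendsto q atTop (𝓝 x) ∧ ∀ n, f (q n) = p n := by
  classical
  set U : ℕ → Set X := fun k => g ⁻¹' Metric.ball (g x) (1 / (k + 1)) with hUdef
  have hUo : ∀ k, IsOpen (U k) := fun k => Metric.isOpen_ball.preimage hg
  have hUx : ∀ k, x ∈ U k := fun k => by
    simp only [hUdef, Set.mem_preimage, Metric.mem_ball, dist_self]
    positivity
  have hNex : ∀ k, ∃ N, ∀ n ≥ N, p n ∈ f '' U k := fun k =>
    eventually_atTop.mp (hB (U k) (hUo k) (hUx k))
  choose N hN using hNex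
  set N' : ℕ → ℕ := fun k => (Finset.range (k + 1)).sup N with hN'def
  have hN'le : ∀ k, N k ≤ N' k := fun k => Finset.le_sup (Finset.self_mem_range_succ k)
  set c : ℕ → ℕ := fun n => Nat.findGreatest (fun k => N' k ≤ n) n with hcdef
  have hc1 : ∀ n k, k ≤ n → N' k ≤ n → N' (c n) ≤ n ∧ k ≤ c n := fun n k hk hNk =>
    ⟨Nat.findGreatest_spec (P := fun k => N' k ≤ n) hk hNk, Nat.le_findGreatest hk hNk⟩
  have hq : ∀ n, ∃ w, f w = p n ∧ (p n = y → w = x) ∧ (N' (c n) ≤ n → w ∈ U (c n)) := by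
    intro n
    by_cases hpn : p n = y
    · exact ⟨x, by rw [hpn, hfx], fun _ => rfl, fun _ => hUx _⟩
    · by_cases hcn : N' (c n) ≤ n
      · have hmem : p n ∈ f '' U (c n) := hN (c n) n (le_trans (hN'le (c n)) hcn)
        obtain ⟨w, hw1, hw2⟩ := hmem
        exact ⟨w, hw2, fun h => absurd h hpn, fun _ => hw1⟩
      · obtain ⟨w, hw⟩ := hsurj (p n)
        exact ⟨w, hw, fun h => absurd h hpn, fun h => absurd h hcn⟩
  choose q hqf hqy hqU using hq
  refine ⟨q, ?_, hqf⟩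
  have hcto : Tendsto c atTop atTop := by
    rw [tendsto_atTop]
    intro K
    rw [eventually_atTop]
    exact ⟨max (N' K) K, fun n hn =>
      (hc1 n K (le_trans (le_max_right _ _) hn) (le_trans (le_max_left _ _) hn)).2⟩
  have hgq : Tendsto (g ∘ q) atTop (𝓝 (g x)) := by
    rw [tendsto_iff_dist_tendsto_zero]
    have hbnd : ∀ᶠ n in atTop, dist (g (q n)) (g x) ≤ 1 / (c n + 1) := by
      refine eventually_atTop.mpr ⟨N' 0, fun n hn => ?_⟩
      have h1 : N' (c n) ≤ n := (hc1 n 0 (Nat.zero_le n) hn).1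
      have h2 : q n ∈ U (c n) := hqU n h1
      exact le_of_lt h2
    have hlim : Tendsto (fun n => 1 / ((c n : ℝ) + 1)) atTop (𝓝 0) :=
      tendsto_one_div_add_atTop_nhds_zero_nat.comp hcto
    exact squeeze_zero' (Eventually.of_forall fun n => dist_nonneg) hbnd hlim
  rw [tendsto_nhds]
  intro V hVo hxV
  by_contra hev
  obtain ⟨φ, hφ, hqV⟩ := extraction_of_frequently_atTop (not_eventually.mp hev)
  have hpφ : ∀ j, p (φ j) ≠ y := by
    intro j hyj
    exact hqV j (by rw [hqy (φ j) hyj]; exact hxV)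
  have hconv : Tendsto (g ∘ (q ∘ φ)) atTop (𝓝 (g x)) := hgq.comp hφ.tendsto_atTop
  have hcl : IsClosed (insert (g x) (Set.range (g ∘ (q ∘ φ)))) :=
    hconv.isCompact_insert_range.isClosed
  have hsub : closure (Set.range (q ∘ φ)) ⊆ Set.range (q ∘ φ) ∪ {x} := by
    intro z hz
    have h1 : g z ∈ closure (g '' Set.range (q ∘ φ)) :=
      image_closure_subset_closure_image hg (mem_image_of_mem g hz)
    have h2 : g '' Set.range (q ∘ φ) = Set.range (g ∘ (q ∘ φ)) := (Set.range_comp g _).symm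
    rw [h2] at h1
    have h3 : g z ∈ insert (g x) (Set.range (g ∘ (q ∘ φ))) :=
      closure_minimal (subset_insert _ _) hcl h1
    rcases h3 with h | ⟨j, hj⟩
    · right
      rw [Set.mem_singleton_iff]
      exact hginj h
    · left
      exact ⟨j, hginj hj⟩
  have hCcl : IsClosed (f '' closure (Set.range (q ∘ φ))) := hclosed _ isClosed_closure
  have hy : y ∈ f '' closure (Set.range (q ∘ φ)) := by
    have h4 : y ∈ closure (f '' closure (Set.range (q ∘ φ))) := by
      refine mem_closure_of_tendsto (hpt.comp hφ.tendsto_atTop) (Eventually.of_forall fun j => ?_)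
      exact ⟨q (φ j), subset_closure ⟨j, rfl⟩, hqf (φ j)⟩
    rwa [hCcl.closure_eq] at h4
  obtain ⟨z, hzC, hfz⟩ := hy
  rcases hsub hzC with ⟨j, hj⟩ | hzx
  · refine hpφ j ?_
    rw [← hqf (φ j), show q (φ j) = z from hj]
    exact hfz
  · have h5 : closure (Set.range (q ∘ φ)) ⊆ Vᶜ := by
      refine closure_minimal ?_ (isClosed_compl_iff.mpr hVo)
      rintro _ ⟨j, rfl⟩
      exact hqV j
    rw [Set.mem_singleton_iff] at hzx
    rw [hzx] at hzC
    exact h5 hzC hxV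

end Lift

/-- Package the submetrizability hypothesis into a continuous injection into a metric space. -/
lemma exists_metric_map {X : Type u} (t σ : TopologicalSpace X) (hle : t ≤ σ)
    (hm : @TopologicalSpace.MetrizableSpace X σ) :
    ∃ (M : Type u) (_ : MetricSpace M) (g : X → M),
      @Continuous X M t _ g ∧ Function.Injective g := by
  obtain ⟨m, hmσ⟩ : ∃ m : MetricSpace X,
      @UniformSpace.toTopologicalSpace X (@PseudoMetricSpace.toUniformSpace X m.toPseudoMetricSpace) = σ :=
    ⟨@TopologicalSpace.metrizableSpaceMetric X σ hm, rfl⟩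
  refine ⟨X, m, id, ?_, injective_id⟩
  rw [hmσ]
  exact continuous_id_iff_le.mpr hle
/-- Every closed sequence-covering continuous surjection `f : X → Y` between T1 regular
spaces with `X` submetrizable is 1-sequence-covering. -/
theorem closed_seqCovering_is_one_seqCovering
    {X Y : Type*} [tX : TopologicalSpace X] [TopologicalSpace Y]
    [T1Space X] [RegularSpace X] [T1Space Y] [RegularSpace Y]
    (hsub : ∃ σ : TopologicalSpace X, tX ≤ σ ∧ @TopologicalSpace.MetrizableSpace X σ)
    (f : X → Y) (hf : Continuous f) (hclosed : IsClosedMap f)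
    (hsurj : Function.Surjective f)
    (hseqcov : ∀ (p : ℕ → Y) (y : Y), NontrivialConvTo p y →
      ∃ (q : ℕ → X) (x : X), Tendsto q atTop (𝓝 x) ∧ ∀ n, f (q n) = p n) :
    ∀ y : Y, ∃ x : X, f x = y ∧
      ∀ p : ℕ → Y, NontrivialConvTo p y →
        ∃ q : ℕ → X, Tendsto q atTop (𝓝 x) ∧ ∀ n, f (q n) = p n := by
  classical
  obtain ⟨M, mM, g, hg, hginj⟩ : ∃ (M : Type _) (_ : MetricSpace M) (g : X → M),
      Continuous g ∧ Function.Injective g := by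
    obtain ⟨σ, hle, hmet⟩ := hsub
    exact exists_metric_map tX σ hle hmet
  letI := mM
  haveI : T2Space Y := inferInstance
  intro y
  by_cases hP : ∃ p : ℕ → Y, NontrivialConvTo p y
  · obtain ⟨p₁, hp₁⟩ := hP
    obtain ⟨p₀, hp₀, hp₀ne⟩ := hp₁.exists_ne
    set K : Set X := {x | f x = y ∧ AclPred f p₀ x} with hKdef
    have hKc : IsClosed K := by
      have hKeq : K = f ⁻¹' {y} ∩ {x | AclPred f p₀ x} := by
        ext x
        simp [hKdef, Set.mem_preimage]
      rw [hKeq]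
      exact (isClosed_singleton.preimage hf).inter (isClosed_aclPred f p₀)
    have hKcomp : IsCompact K :=
      isCompact_of_acl hclosed hg hginj hp₀.1 hp₀ne hKc (fun x hx => hx.2)
    by_cases hgood : ∃ x, x ∈ K ∧ ∀ U : Set X, IsOpen U → x ∈ U →
        ∀ s : ℕ → Y, NontrivialConvTo s y → ∃ n, s n ∈ f '' U
    · obtain ⟨x, hxK, hx⟩ := hgood
      exact ⟨x, hxK.1, fun p hp => exists_lift_tendsto hclosed hg hginj hsurj hxK.1 hp.1
        (bevPred_of_good hxK.1 hx hp)⟩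
    · exfalso
      push_neg at hgood
      choose U hUo hUm s hsNT hsAv using hgood
      obtain ⟨t, ht⟩ := hKcomp.elim_nhds_subcover' (fun x hx => U x hx)
        (fun x hx => (hUo x hx).mem_nhds (hUm x hx))
      obtain ⟨Q, hQ, hQtrans⟩ := exists_merge t p₀ hp₀ (fun i => s i.1 i.2)
        (fun i _ => hsNT i.1 i.2)
      obtain ⟨q, z, hqz, hqQ⟩ := hseqcov Q y hQ
      have hfz : f z = y := by
        have h1 : Tendsto Q atTop (𝓝 (f z)) := ((hf.tendsto z).comp hqz).congr hqQ
        exact tendsto_nhds_unique h1 hQ.1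
      have hBz : BevPred f Q z := by
        intro V hVo hzV
        have h2 : ∀ᶠ n in atTop, q n ∈ V := hqz.eventually (hVo.eventually_mem hzV)
        exact h2.mono fun n hn => ⟨q n, hn, hqQ n⟩
      have hzK : z ∈ K := by
        refine ⟨hfz, ?_⟩
        intro V hVo hzV
        exact ((hQtrans (f '' V) (hBz V hVo hzV)).1).frequently
      have hzU : z ∈ ⋃ x ∈ t, U x.1 x.2 := ht hzK
      rw [Set.mem_iUnion₂] at hzU
      obtain ⟨i, hit, hziU⟩ := hzU
      have hev : ∀ᶠ n in atTop, s i.1 i.2 n ∈ f '' U i.1 i.2 :=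
        (hQtrans _ (hBz _ (hUo i.1 i.2) hziU)).2 i hit
      obtain ⟨n, hn⟩ := hev.exists
      exact hsAv i.1 i.2 n hn
  · obtain ⟨x, hx⟩ := hsurj y
    exact ⟨x, hx, fun p hp => absurd ⟨p, hp⟩ hP⟩
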